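/- For nonnegative reals with S₁ + S₂ > D₀, the supply-proportional fluxes qᵢ = min{Sᵢ, max{D₀ − S_j, (Cᵢ/(C₁+C₂)) D₀}} satisfy q₁ + q₂ = D₀; i.e., when total downstream supply exceeds upstream demand, the evacuation diverge serves all upstream demand. -/

import Mathlib

theorem supply_proportional_serves_all_demand
    (D₀ S₁ S₂ C₁ C₂ : ℝ)
    (hD₀ : 0 ≤ D₀) (hS₁ : 0 ≤ S₁) (hS₂ : 0 ≤ S₂)
    (hC₁ : 0 ≤ C₁) (hC₂ : 0 ≤ C₂) (hC : 0 < C₁ + C₂)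
    (hS₁C : S₁ ≤ C₁) (hS₂C : S₂ ≤ C₂) (hDC : D₀ ≤ C₁ + C₂)
    (hsum : D₀ < S₁ + S₂) :
    min S₁ (max (D₀ - S₂) (C₁ / (C₁ + C₂) * D₀)) +
      min S₂ (max (D₀ - S₁) (C₂ / (C₁ + C₂) * D₀)) = D₀ := by
  have hab : C₁/(C₁+C₂)*D₀ + C₂/(C₁+C₂)*D₀ = D₀ := by
    field_simp
  rcases le_or_gt (C₁/(C₁+C₂)*D₀) S₁ with h1 | h1
  · rcases le_or_gt (C₂/(C₁+C₂)*D₀) S₂ with h2 | h2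
    · rw [max_eq_right (by linarith), max_eq_right (by linarith),
        min_eq_right h1, min_eq_right h2, hab]
    · rw [min_eq_left (le_max_of_le_right h2.le), max_eq_left (by linarith),
        min_eq_right (by linarith)]
      ring
  · rw [min_eq_left (le_max_of_le_right h1.le), max_eq_left (by linarith),
      min_eq_right (by linarith)]
    ring
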